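/- Let f : 2^E → ℝ≥0 be submodular. Then for any two disjoint nonempty sets A, B ⊆ E with |A| = a and |B| = b, the function g(S) := f(S)/|S| (for nonempty S) satisfies Σ_{e∈B} (g(A∪{e}) − g(A)) ≥ ((a+b)/(a+1)) · (g(A∪B) − g(A)). -/

import Mathlib

open Finset

theorem stmt_8 {E : Type*} [Fintype E] [DecidableEq E]
    (f : Finset E → ℝ) (hnn : ∀ S, 0 ≤ f S)
    (hsub : ∀ S T : Finset E, f S + f T ≥ f (S ∪ T) + f (S ∩ T))
    (g : Finset E → ℝ) (hg : ∀ S : Finset E, S.Nonempty → g S = f S / (S.card : ℝ))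
    (A B : Finset E) (a b : ℕ) (ha : A.card = a) (hb : B.card = b)
    (hA : A.Nonempty) (hB : B.Nonempty) (hAB : Disjoint A B) :
    ∑ e ∈ B, (g (insert e A) - g A) ≥
      (((a : ℝ) + b) / ((a : ℝ) + 1)) * (g (A ∪ B) - g A) := by
  -- key combinatorial lemma
  have key : ∀ C : Finset E, C.Nonempty → C ⊆ B →
      f (A ∪ C) + ((C.card : ℝ) - 1) * f A ≤ ∑ e ∈ C, f (insert e A) := by
    intro C hC hCB
    clear hC
    induction C using Finset.cons_induction with
    | empty =>
        simp only [Finset.union_empty, Finset.card_empty, Finset.sum_empty]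
        push_cast; ring_nf; norm_num
    | cons e C he ih =>
        have hCB' : C ⊆ B := fun x hx => hCB (Finset.mem_cons.mpr (Or.inr hx))
        have heB : e ∈ B := hCB (Finset.mem_cons_self e C)
        have heA : e ∉ A := fun h => (Finset.disjoint_left.mp hAB h) heB
        have ih' := ih hCB'
        have hsub' := hsub (A ∪ C) (insert e A)
        have hunion : (A ∪ C) ∪ insert e A = A ∪ (Finset.cons e C he) := by
          ext x; simp [Finset.mem_insert, Finset.mem_cons]; tauto
        have hinter : (A ∪ C) ∩ insert e A = A := by
          ext x
          simp only [Finset.mem_inter, Finset.mem_union, Finset.mem_insert]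
          constructor
          · rintro ⟨h1 | h1, h2 | h2⟩
            · exact h1
            · exact h1
            · exact absurd (h2 ▸ h1) he
            · exact h2
          · intro h; exact ⟨Or.inl h, Or.inr h⟩
        rw [hunion, hinter] at hsub'
        rw [Finset.sum_cons, Finset.card_cons]
        push_cast
        linarith
  have hS := key B hB (le_refl B)
  -- rewrite g
  have hAne : (0:ℝ) < a := by
    have := Finset.card_pos.mpr hA; rw [ha] at this; exact_mod_cast this
  have hBne : (0:ℝ) < b := by
    have := Finset.card_pos.mpr hB; rw [hb] at this; exact_mod_cast this
  have hgA : g A = f A / a := by rw [hg A hA, ha]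
  have hgAB : g (A ∪ B) = f (A ∪ B) / ((a:ℝ) + b) := by
    rw [hg (A ∪ B) (hA.mono Finset.subset_union_left),
      Finset.card_union_of_disjoint hAB, ha, hb]; push_cast; ring_nf
  have hsum : ∑ e ∈ B, (g (insert e A) - g A)
      = (∑ e ∈ B, f (insert e A)) / ((a:ℝ) + 1) - b * (f A / a) := by
    rw [Finset.sum_sub_distrib, Finset.sum_const, hb, nsmul_eq_mul, hgA,
      Finset.sum_div]
    congr 1
    apply Finset.sum_congr rfl
    intro e heB
    have heA : e ∉ A := fun h => (Finset.disjoint_left.mp hAB h) heB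
    rw [hg (insert e A) ⟨e, Finset.mem_insert_self e A⟩,
      Finset.card_insert_of_notMem heA, ha]
    push_cast; ring_nf
  rw [hsum, hgA, hgAB, ge_iff_le]
  rw [hb] at hS
  have hfa := hnn A
  have h1 : (0:ℝ) < (a:ℝ) + 1 := by linarith
  have h2 : (0:ℝ) < (a:ℝ) + b := by linarith
  have lhs_eq : ((a:ℝ)+b)/((a:ℝ)+1) * (f (A ∪ B)/((a:ℝ)+b) - f A/a)
      = (f (A ∪ B) - ((a:ℝ)+b)*f A/a)/((a:ℝ)+1) := by
    field_simp
  have rhs_eq : (∑ e ∈ B, f (insert e A))/((a:ℝ)+1) - b*(f A/a)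
      = ((∑ e ∈ B, f (insert e A)) - (b:ℝ)*((a:ℝ)+1)*f A/a)/((a:ℝ)+1) := by
    field_simp
  rw [lhs_eq, rhs_eq]
  apply (div_le_div_iff_of_pos_right h1).mpr
  have hsplit : (b:ℝ)*((a:ℝ)+1)*f A/a = ((a:ℝ)+b)*f A/a + ((b:ℝ)-1)*f A := by
    field_simp; ring
  linarith
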